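/- The group Γ(2) of matrices in SL₂(ℤ) congruent to the identity mod 2, together with −I, is generated by T² = [[1,2],[0,1]] and g₂ = [[1,0],[2,1]]. -/

import Mathlib

open Matrix

/-- The matrix `T² = [[1,2],[0,1]]` as an element of `SL(2, ℤ)`. -/
def Tsq : Matrix.SpecialLinearGroup (Fin 2) ℤ :=
  ⟨!![1, 2; 0, 1], by norm_num [Matrix.det_fin_two_of]⟩

/-- The matrix `g₂ = [[1,0],[2,1]]` as an element of `SL(2, ℤ)`. -/
def gTwo : Matrix.SpecialLinearGroup (Fin 2) ℤ :=
  ⟨!![1, 0; 2, 1], by norm_num [Matrix.det_fin_two_of]⟩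

/-- The matrix `-I` as an element of `SL(2, ℤ)`. -/
def negI : Matrix.SpecialLinearGroup (Fin 2) ℤ :=
  ⟨!![-1, 0; 0, -1], by norm_num [Matrix.det_fin_two_of]⟩

lemma reduce_lemma (x y : ℤ) (hy : y ≠ 0) (hpar : Odd (x + y)) :
    ∃ n : ℤ, (x + 2 * n * y).natAbs < y.natAbs := by
  obtain ⟨k, hk⟩ := hpar
  have h2 : (2 * y) ≠ 0 := mul_ne_zero two_ne_zero hy
  have hr0 : 0 ≤ x % (2 * y) := Int.emod_nonneg x h2
  have hr1 : x % (2 * y) < |2 * y| := Int.emod_lt_abs x h2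
  have habs : |2 * y| = 2 * (y.natAbs : ℤ) := by
    rw [abs_mul, Int.abs_eq_natAbs]; norm_num
  rw [habs] at hr1
  have hdiv : 2 * y * (x / (2 * y)) + x % (2 * y) = x := Int.mul_ediv_add_emod x (2 * y)
  have hx2 : (2 : ℤ) ∣ x - x % (2 * y) := ⟨y * (x / (2 * y)), by linarith⟩
  set q := x / (2 * y) with hq
  set r := x % (2 * y) with hr
  rcases lt_or_ge r (y.natAbs : ℤ) with hlt | hge
  · refine ⟨-q, ?_⟩
    have he : x + 2 * (-q) * y = r := by linarith
    rw [he]; omega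
  · rcases hy.lt_or_gt with hneg | hpos
    · refine ⟨-q + 1, ?_⟩
      have he : x + 2 * (-q + 1) * y = r + 2 * y := by linarith
      rw [he]; omega
    · refine ⟨-q - 1, ?_⟩
      have he : x + 2 * (-q - 1) * y = r - 2 * y := by linarith
      rw [he]; omega

lemma Tsq_eq : Tsq = ModularGroup.T ^ (2 : ℤ) := by
  apply Subtype.ext
  rw [ModularGroup.coe_T_zpow]
  rfl

lemma coe_Tsq_zpow (n : ℤ) :
    ((Tsq ^ n : Matrix.SpecialLinearGroup (Fin 2) ℤ) : Matrix (Fin 2) (Fin 2) ℤ)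
      = !![1, 2 * n; 0, 1] := by
  rw [Tsq_eq, ← _root_.zpow_mul, ModularGroup.coe_T_zpow]

lemma gTwo_inv : gTwo⁻¹ = ⟨!![1, 0; -2, 1], by norm_num [Matrix.det_fin_two_of]⟩ := by
  apply inv_eq_of_mul_eq_one_right
  apply Subtype.ext
  show ((gTwo : Matrix (Fin 2) (Fin 2) ℤ) * _) = _
  rw [show (gTwo : Matrix (Fin 2) (Fin 2) ℤ) = !![1, 0; 2, 1] from rfl,
    Matrix.mul_fin_two, show ((1 : Matrix.SpecialLinearGroup (Fin 2) ℤ) : Matrix (Fin 2) (Fin 2) ℤ) = 1 from rfl,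
    Matrix.one_fin_two]
  norm_num

lemma coe_gTwo_pow (n : ℕ) :
    ((gTwo ^ n : Matrix.SpecialLinearGroup (Fin 2) ℤ) : Matrix (Fin 2) (Fin 2) ℤ)
      = !![1, 0; 2 * (n : ℤ), 1] := by
  induction n with
  | zero => simp [Matrix.one_fin_two]
  | succ k ih =>
    rw [pow_succ, Matrix.SpecialLinearGroup.coe_mul, ih,
      show (gTwo : Matrix (Fin 2) (Fin 2) ℤ) = !![1, 0; 2, 1] from rfl,
      Matrix.mul_fin_two]
    ext i j
    fin_cases i <;> fin_cases j <;> simp <;> push_cast <;> ring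

lemma coe_gTwo_inv_pow (n : ℕ) :
    (((gTwo⁻¹) ^ n : Matrix.SpecialLinearGroup (Fin 2) ℤ) : Matrix (Fin 2) (Fin 2) ℤ)
      = !![1, 0; -(2 * (n : ℤ)), 1] := by
  induction n with
  | zero => simp [Matrix.one_fin_two]
  | succ k ih =>
    rw [pow_succ, Matrix.SpecialLinearGroup.coe_mul, ih, gTwo_inv]
    show _ * !![1, 0; -2, 1] = _
    rw [Matrix.mul_fin_two]
    ext i j
    fin_cases i <;> fin_cases j <;> simp <;> push_cast <;> ring

lemma coe_gTwo_zpow (n : ℤ) :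
    ((gTwo ^ n : Matrix.SpecialLinearGroup (Fin 2) ℤ) : Matrix (Fin 2) (Fin 2) ℤ)
      = !![1, 0; 2 * n, 1] := by
  obtain ⟨m, rfl | rfl⟩ := Int.eq_nat_or_neg n
  · rw [zpow_natCast, coe_gTwo_pow]
  · rw [_root_.zpow_neg, ← _root_.inv_zpow, zpow_natCast, coe_gTwo_inv_pow,
      show -(2 * (m : ℤ)) = 2 * -(m : ℤ) by ring]

lemma Tsq_mem_Gamma : Tsq ∈ CongruenceSubgroup.Gamma 2 := by
  rw [CongruenceSubgroup.Gamma_mem]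
  refine ⟨?_, ?_, ?_, ?_⟩ <;> rfl

lemma gTwo_mem_Gamma : gTwo ∈ CongruenceSubgroup.Gamma 2 := by
  rw [CongruenceSubgroup.Gamma_mem]
  refine ⟨?_, ?_, ?_, ?_⟩ <;> rfl

lemma negI_mem_Gamma : negI ∈ CongruenceSubgroup.Gamma 2 := by
  rw [CongruenceSubgroup.Gamma_mem]
  refine ⟨?_, ?_, ?_, ?_⟩ <;> decide

lemma dvd_of_zmod2 (x : ℤ) (h : ((x : ZMod 2) = 0)) : (2 : ℤ) ∣ x := by
  exact_mod_cast (ZMod.intCast_zmod_eq_zero_iff_dvd x 2).mp h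

lemma mem_closure_aux : ∀ (k : ℕ) (A : Matrix.SpecialLinearGroup (Fin 2) ℤ),
    ((A : Matrix (Fin 2) (Fin 2) ℤ) 1 0).natAbs = k →
    A ∈ CongruenceSubgroup.Gamma 2 → A ∈ Subgroup.closure {Tsq, gTwo, negI} := by
  intro k
  induction k using Nat.strong_induction_on with
  | _ k ih =>
  intro A hk hA
  have hTc : Tsq ∈ Subgroup.closure {Tsq, gTwo, negI} := Subgroup.subset_closure (by simp)
  have hgc : gTwo ∈ Subgroup.closure {Tsq, gTwo, negI} := Subgroup.subset_closure (by simp)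
  have hnc : negI ∈ Subgroup.closure {Tsq, gTwo, negI} := Subgroup.subset_closure (by simp)
  obtain ⟨ha', hb', hc', hd'⟩ := CongruenceSubgroup.Gamma_mem.mp hA
  obtain ⟨p, hp⟩ : (2 : ℤ) ∣ ((A : Matrix (Fin 2) (Fin 2) ℤ) 0 0 - 1) := by
    apply dvd_of_zmod2; push_cast [ha']; ring
  obtain ⟨mb, hmb⟩ : (2 : ℤ) ∣ ((A : Matrix (Fin 2) (Fin 2) ℤ) 0 1) := by
    apply dvd_of_zmod2; push_cast [hb']; ring
  obtain ⟨q, hq⟩ : (2 : ℤ) ∣ ((A : Matrix (Fin 2) (Fin 2) ℤ) 1 0) := by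
    apply dvd_of_zmod2; push_cast [hc']; ring
  have hdet : (A : Matrix (Fin 2) (Fin 2) ℤ) 0 0 * (A : Matrix (Fin 2) (Fin 2) ℤ) 1 1
      - (A : Matrix (Fin 2) (Fin 2) ℤ) 0 1 * (A : Matrix (Fin 2) (Fin 2) ℤ) 1 0 = 1 := by
    have := A.2; rwa [Matrix.det_fin_two] at this
  by_cases hc : (A : Matrix (Fin 2) (Fin 2) ℤ) 1 0 = 0
  · rw [hc, mul_zero, sub_zero] at hdet
    rcases Int.mul_eq_one_iff_eq_one_or_neg_one.mp hdet with ⟨h1, hd1⟩ | ⟨h1, hd1⟩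
    · have hAeq : A = Tsq ^ mb := by
        apply Subtype.ext
        rw [coe_Tsq_zpow]
        conv_lhs => rw [Matrix.eta_fin_two (A : Matrix (Fin 2) (Fin 2) ℤ)]
        rw [h1, hc, hd1, hmb]
      rw [hAeq]; exact zpow_mem hTc mb
    · have hAeq : A = negI * Tsq ^ (-mb) := by
        apply Subtype.ext
        rw [Matrix.SpecialLinearGroup.coe_mul, coe_Tsq_zpow,
          show ((negI : Matrix.SpecialLinearGroup (Fin 2) ℤ) : Matrix (Fin 2) (Fin 2) ℤ)
            = !![-1, 0; 0, -1] from rfl, Matrix.mul_fin_two]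
        conv_lhs => rw [Matrix.eta_fin_two (A : Matrix (Fin 2) (Fin 2) ℤ)]
        rw [h1, hc, hd1, hmb]
        congr 1 <;> norm_num
      rw [hAeq]; exact mul_mem hnc (zpow_mem hTc _)
  · -- c ≠ 0
    have hodd1 : Odd ((A : Matrix (Fin 2) (Fin 2) ℤ) 0 0 + (A : Matrix (Fin 2) (Fin 2) ℤ) 1 0) :=
      ⟨p + q, by linarith⟩
    obtain ⟨n, hn⟩ := reduce_lemma _ _ hc hodd1
    set B := Tsq ^ n * A with hB
    have hBcoe : (B : Matrix (Fin 2) (Fin 2) ℤ) = !![1, 2 * n; 0, 1] * (A : Matrix (Fin 2) (Fin 2) ℤ) := by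
      rw [hB, Matrix.SpecialLinearGroup.coe_mul, coe_Tsq_zpow]
    have hB00 : (B : Matrix (Fin 2) (Fin 2) ℤ) 0 0
        = (A : Matrix (Fin 2) (Fin 2) ℤ) 0 0 + 2 * n * (A : Matrix (Fin 2) (Fin 2) ℤ) 1 0 := by
      rw [hBcoe]; simp [Matrix.mul_apply, Fin.sum_univ_two]
    have hB10 : (B : Matrix (Fin 2) (Fin 2) ℤ) 1 0 = (A : Matrix (Fin 2) (Fin 2) ℤ) 1 0 := by
      rw [hBcoe]; simp [Matrix.mul_apply, Fin.sum_univ_two]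
    obtain ⟨t, ht⟩ : ∃ t : ℤ, 2 * n * (A : Matrix (Fin 2) (Fin 2) ℤ) 1 0 = 2 * t :=
      ⟨n * (A : Matrix (Fin 2) (Fin 2) ℤ) 1 0, by ring⟩
    rw [ht] at hB00 hn
    have hB00ne : (B : Matrix (Fin 2) (Fin 2) ℤ) 0 0 ≠ 0 := by rw [hB00]; omega
    have hodd2 : Odd ((A : Matrix (Fin 2) (Fin 2) ℤ) 1 0 + (B : Matrix (Fin 2) (Fin 2) ℤ) 0 0) := by
      refine ⟨q + p + t, ?_⟩; rw [hB00]; omega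
    obtain ⟨m2, hm2⟩ := reduce_lemma _ _ hB00ne hodd2
    set C := gTwo ^ m2 * B with hC
    have hCcoe : (C : Matrix (Fin 2) (Fin 2) ℤ) = !![1, 0; 2 * m2, 1] * (B : Matrix (Fin 2) (Fin 2) ℤ) := by
      rw [hC, Matrix.SpecialLinearGroup.coe_mul, coe_gTwo_zpow]
    have hC10 : (C : Matrix (Fin 2) (Fin 2) ℤ) 1 0
        = (A : Matrix (Fin 2) (Fin 2) ℤ) 1 0 + 2 * m2 * (B : Matrix (Fin 2) (Fin 2) ℤ) 0 0 := by
      rw [hCcoe]; simp [Matrix.mul_apply, Fin.sum_univ_two, hB10]; ring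
    have hlt : ((C : Matrix (Fin 2) (Fin 2) ℤ) 1 0).natAbs < k := by
      rw [hC10]
      exact lt_of_lt_of_le hm2 (by rw [hB00]; omega)
    have hCΓ : C ∈ CongruenceSubgroup.Gamma 2 :=
      mul_mem (zpow_mem gTwo_mem_Gamma m2) (mul_mem (zpow_mem Tsq_mem_Gamma n) hA)
    have hCH := ih _ hlt C rfl hCΓ
    have hAeq : A = Tsq ^ (-n) * (gTwo ^ (-m2) * C) := by
      rw [hC, hB]; group
    rw [hAeq]
    exact mul_mem (zpow_mem hTc _) (mul_mem (zpow_mem hgc _) hCH)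

/-- `Γ(2)`, together with `-I`, is generated by `T²` and `g₂`. -/
theorem Gamma_two_generated :
    CongruenceSubgroup.Gamma 2 = Subgroup.closure {Tsq, gTwo, negI} := by
  apply le_antisymm
  · intro A hA
    exact mem_closure_aux _ A rfl hA
  · rw [Subgroup.closure_le]
    rintro x hx
    simp only [Set.mem_insert_iff, Set.mem_singleton_iff] at hx
    rcases hx with rfl | rfl | rfl
    exacts [Tsq_mem_Gamma, gTwo_mem_Gamma, negI_mem_Gamma]
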